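/- Consider the double-support V-SLIP model with Hamiltonian H(q,p) = (p1² + p2²)/(2 m_h) + m_h g0 q2 + (k0/2)(L0 − L1(q))² + (k0/2)(L0 − L2(q))² and control potentials φ_i(q) = −(1/2)(L0 − L_i(q))². Write the controlled dynamics as ẋ = f(x) + g1(x) u1 + g2(x) u2 on the state x = (q, p) ∈ ℝ⁴, with drift f(x) = (∂H/∂p, −∂H/∂q) and input vector fields g_i(x) = (0, ∇_q φ_i(q)). Given C² and C¹ reference functions q2*, v* : ℝ → ℝ, define the error outputs h1(x) = q2*(q1) − q2 and h2(x) = v*(q1) − p1/m_h, and the decoupling matrix A(x) = [[L_{g1} L_f h1, L_{g2} L_f h1], [L_{g1} h2, L_{g2} h2]](x). Let κ_p, κ_d, κ_v > 0, and suppose x : [0, ∞) → ℝ⁴ is a C¹ solution of the closed-loop system with feedback (u1(t), u2(t))ᵀ = −A(x(t))⁻¹ ((L_f² h1 + κ_d L_f h1 + κ_p h1)(x(t)), (L_f h2 + κ_v h2)(x(t)))ᵀ, along which A(x(t)) is invertible. Then h1(x(t)) → 0 and d/dt [h1(x(t))] → 0 as t → ∞, and h2(x(t)) = e^{−κ_v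 t} h2(x(0)) → 0 as t → ∞. -/

import Mathlib

open Matrix Filter

/- State convention: `x : Fin 4 → ℝ` with `x 0 = q1`, `x 1 = q2`, `x 2 = p1`, `x 3 = p2`. -/

/-- Leg length `L_i(q) = sqrt((q1 - c_i)^2 + q2^2)`. -/
noncomputable def legLen (c : ℝ) (x : Fin 4 → ℝ) : ℝ :=
  Real.sqrt ((x 0 - c) ^ 2 + (x 1) ^ 2)

/-- Hamiltonian of the double-support V-SLIP model as a function of the state. -/
noncomputable def Hfun (mh g0 k0 L0 c1 c2 : ℝ) (x : Fin 4 → ℝ) : ℝ :=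
  ((x 2) ^ 2 + (x 3) ^ 2) / (2 * mh) + mh * g0 * x 1
    + k0 / 2 * (L0 - legLen c1 x) ^ 2 + k0 / 2 * (L0 - legLen c2 x) ^ 2

/-- Control potential `φ_i(q) = -(1/2)(L0 - L_i(q))^2`. -/
noncomputable def phiPot (c L0 : ℝ) (x : Fin 4 → ℝ) : ℝ :=
  -(1 / 2) * (L0 - legLen c x) ^ 2

/-- The drift vector field `f(x) = (∂H/∂p, -∂H/∂q)`. -/
noncomputable def fDrift (mh g0 k0 L0 c1 c2 : ℝ) (x : Fin 4 → ℝ) : Fin 4 → ℝ :=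
  ![fderiv ℝ (Hfun mh g0 k0 L0 c1 c2) x (Pi.single 2 1),
    fderiv ℝ (Hfun mh g0 k0 L0 c1 c2) x (Pi.single 3 1),
    -fderiv ℝ (Hfun mh g0 k0 L0 c1 c2) x (Pi.single 0 1),
    -fderiv ℝ (Hfun mh g0 k0 L0 c1 c2) x (Pi.single 1 1)]

/-- The input vector field `g_i(x) = (0, ∇_q φ_i(q))`. -/
noncomputable def gInput (c L0 : ℝ) (x : Fin 4 → ℝ) : Fin 4 → ℝ :=
  ![0, 0, fderiv ℝ (phiPot c L0) x (Pi.single 0 1),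
    fderiv ℝ (phiPot c L0) x (Pi.single 1 1)]

/-- Height error output `h1(x) = q2*(q1) - q2`. -/
noncomputable def h1err (q2star : ℝ → ℝ) (x : Fin 4 → ℝ) : ℝ := q2star (x 0) - x 1

/-- Forward-velocity error output `h2(x) = v*(q1) - p1/m_h`. -/
noncomputable def h2err (mh : ℝ) (vstar : ℝ → ℝ) (x : Fin 4 → ℝ) : ℝ :=
  vstar (x 0) - x 2 / mh

/-- `L_f h1`. -/
noncomputable def Lfh1 (mh g0 k0 L0 c1 c2 : ℝ) (q2star : ℝ → ℝ) (x : Fin 4 → ℝ) : ℝ :=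
  fderiv ℝ (h1err q2star) x (fDrift mh g0 k0 L0 c1 c2 x)

/-- The double-support decoupling matrix
`A(x) = [[L_{g1} L_f h1, L_{g2} L_f h1], [L_{g1} h2, L_{g2} h2]]`. -/
noncomputable def Amat (mh g0 k0 L0 c1 c2 : ℝ) (q2star vstar : ℝ → ℝ) (x : Fin 4 → ℝ) :
    Matrix (Fin 2) (Fin 2) ℝ :=
  !![fderiv ℝ (Lfh1 mh g0 k0 L0 c1 c2 q2star) x (gInput c1 L0 x),
     fderiv ℝ (Lfh1 mh g0 k0 L0 c1 c2 q2star) x (gInput c2 L0 x);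
     fderiv ℝ (h2err mh vstar) x (gInput c1 L0 x),
     fderiv ℝ (h2err mh vstar) x (gInput c2 L0 x)]

/-- The decoupling feedback
`u = -A(x)⁻¹ (L_f² h1 + κ_d L_f h1 + κ_p h1, L_f h2 + κ_v h2)ᵀ`. -/
noncomputable def uFb (mh g0 k0 L0 c1 c2 κp κd κv : ℝ) (q2star vstar : ℝ → ℝ)
    (x : Fin 4 → ℝ) : Fin 2 → ℝ :=
  -((Amat mh g0 k0 L0 c1 c2 q2star vstar x)⁻¹ *ᵥ
    ![fderiv ℝ (Lfh1 mh g0 k0 L0 c1 c2 q2star) x (fDrift mh g0 k0 L0 c1 c2 x)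
        + κd * Lfh1 mh g0 k0 L0 c1 c2 q2star x + κp * h1err q2star x,
      fderiv ℝ (h2err mh vstar) x (fDrift mh g0 k0 L0 c1 c2 x)
        + κv * h2err mh vstar x])

namespace S18

noncomputable def E4 (i : Fin 4) : (Fin 4 → ℝ) →L[ℝ] ℝ := ContinuousLinearMap.proj i
lemma E4_apply (i : Fin 4) (v : Fin 4 → ℝ) : E4 i v = v i := rfl
noncomputable def P01 : (Fin 4 → ℝ) →L[ℝ] ℝ × ℝ := (E4 0).prod (E4 1)
lemma P01_apply (v : Fin 4 → ℝ) : P01 v = (v 0, v 1) := rfl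

lemma h1err_hasFDerivAt {q2star : ℝ → ℝ} (hq : Differentiable ℝ q2star) (y : Fin 4 → ℝ) :
    HasFDerivAt (h1err q2star) (deriv q2star (y 0) • E4 0 - E4 1) y := by
  have h0 : HasFDerivAt (fun v : Fin 4 → ℝ => q2star (v 0)) (deriv q2star (y 0) • E4 0) y :=
    HasDerivAt.comp_hasFDerivAt y (hq (y 0)).hasDerivAt (E4 0).hasFDerivAt
  exact h0.sub (E4 1).hasFDerivAt

lemma h2err_hasFDerivAt {mh : ℝ} {vstar : ℝ → ℝ} (hv : Differentiable ℝ vstar) (y : Fin 4 → ℝ) :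
    HasFDerivAt (h2err mh vstar) (deriv vstar (y 0) • E4 0 - mh⁻¹ • E4 2) y := by
  have h0 : HasFDerivAt (fun v : Fin 4 → ℝ => vstar (v 0)) (deriv vstar (y 0) • E4 0) y :=
    HasDerivAt.comp_hasFDerivAt y (hv (y 0)).hasDerivAt (E4 0).hasFDerivAt
  have h2 : HasFDerivAt (fun v : Fin 4 → ℝ => v 2 / mh) (mh⁻¹ • E4 2) y := by
    simpa [div_eq_mul_inv, smul_smul, mul_comm, E4_apply] using ((E4 2).hasFDerivAt (x := y)).mul_const mh⁻¹
  exact h0.sub h2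

noncomputable def springS (k0 L0 c : ℝ) (p : ℝ × ℝ) : ℝ :=
  k0 / 2 * (L0 - Real.sqrt ((p.1 - c) ^ 2 + p.2 ^ 2)) ^ 2

lemma springS_diff {k0 L0 c : ℝ} {p : ℝ × ℝ} (h : (p.1 - c) ^ 2 + p.2 ^ 2 ≠ 0) :
    DifferentiableAt ℝ (springS k0 L0 c) p := by
  have hinner : DifferentiableAt ℝ (fun p : ℝ × ℝ => (p.1 - c) ^ 2 + p.2 ^ 2) p :=
    ((differentiableAt_fst.sub_const c).pow 2).add (differentiableAt_snd.pow 2)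
  exact (differentiableAt_const _).mul
    (((differentiableAt_const L0).sub (hinner.sqrt h)).pow 2)

lemma legLen_sq_pos {c : ℝ} {y : Fin 4 → ℝ} (h : 0 < legLen c y) :
    (y 0 - c) ^ 2 + (y 1) ^ 2 ≠ 0 := by
  intro hz
  rw [legLen, hz, Real.sqrt_zero] at h
  exact lt_irrefl _ h

lemma Hfun_hasFDerivAt {mh g0 k0 L0 c1 c2 : ℝ} {y : Fin 4 → ℝ}
    (h1 : 0 < legLen c1 y) (h2 : 0 < legLen c2 y) :
    HasFDerivAt (Hfun mh g0 k0 L0 c1 c2)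
      ((2 * mh)⁻¹ • (y 2 • E4 2 + y 2 • E4 2 + (y 3 • E4 3 + y 3 • E4 3))
        + (mh * g0) • E4 1
        + (fderiv ℝ (springS k0 L0 c1) (P01 y)).comp P01
        + (fderiv ℝ (springS k0 L0 c2) (P01 y)).comp P01) y := by
  have hsq2 : HasFDerivAt (fun v : Fin 4 → ℝ => v 2 ^ 2) (y 2 • E4 2 + y 2 • E4 2) y := by
    simpa [pow_two, Pi.mul_def, E4_apply] using ((E4 2).hasFDerivAt (x := y)).mul ((E4 2).hasFDerivAt (x := y))
  have hsq3 : HasFDerivAt (fun v : Fin 4 → ℝ => v 3 ^ 2) (y 3 • E4 3 + y 3 • E4 3) y := by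
    simpa [pow_two, Pi.mul_def, E4_apply] using ((E4 3).hasFDerivAt (x := y)).mul ((E4 3).hasFDerivAt (x := y))
  have hkin : HasFDerivAt (fun v : Fin 4 → ℝ => (v 2 ^ 2 + v 3 ^ 2) / (2 * mh))
      ((2 * mh)⁻¹ • (y 2 • E4 2 + y 2 • E4 2 + (y 3 • E4 3 + y 3 • E4 3))) y := by
    simpa [div_eq_mul_inv, smul_smul, mul_comm] using (hsq2.add hsq3).mul_const (2 * mh)⁻¹
  have hlin : HasFDerivAt (fun v : Fin 4 → ℝ => mh * g0 * v 1) ((mh * g0) • E4 1) y :=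
    ((E4 1).hasFDerivAt (x := y)).const_mul (mh * g0)
  have hspr : ∀ c : ℝ, 0 < legLen c y →
      HasFDerivAt (fun v : Fin 4 → ℝ => k0 / 2 * (L0 - legLen c v) ^ 2)
        ((fderiv ℝ (springS k0 L0 c) (P01 y)).comp P01) y := by
    intro c hc
    have hc' := ((springS_diff (k0 := k0) (L0 := L0)
      (legLen_sq_pos hc)).hasFDerivAt).comp y (P01.hasFDerivAt)
    have hfun : (springS k0 L0 c ∘ ⇑P01) = fun v : Fin 4 → ℝ => k0 / 2 * (L0 - legLen c v) ^ 2 := by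
      funext v
      rw [Function.comp_apply, P01_apply]
      rfl
    rw [hfun] at hc'
    exact hc'
  have := ((hkin.add hlin).add (hspr c1 h1)).add (hspr c2 h2)
  exact this

lemma P01_single2 : P01 (Pi.single 2 1 : Fin 4 → ℝ) = 0 := by
  rw [P01_apply]
  simp [Pi.single_eq_of_ne]

lemma P01_single3 : P01 (Pi.single 3 1 : Fin 4 → ℝ) = 0 := by
  rw [P01_apply]
  simp [Pi.single_eq_of_ne]

lemma Hfun_fderiv_single2 {mh g0 k0 L0 c1 c2 : ℝ} {y : Fin 4 → ℝ} (hmh : mh ≠ 0)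
    (h1 : 0 < legLen c1 y) (h2 : 0 < legLen c2 y) :
    fderiv ℝ (Hfun mh g0 k0 L0 c1 c2) y (Pi.single 2 1) = y 2 / mh := by
  rw [(Hfun_hasFDerivAt h1 h2).fderiv]
  simp [ContinuousLinearMap.comp_apply, P01_single2, E4_apply, Pi.single_eq_of_ne,
    Pi.single_eq_same]
  field_simp
  ring

lemma Hfun_fderiv_single3 {mh g0 k0 L0 c1 c2 : ℝ} {y : Fin 4 → ℝ} (hmh : mh ≠ 0)
    (h1 : 0 < legLen c1 y) (h2 : 0 < legLen c2 y) :
    fderiv ℝ (Hfun mh g0 k0 L0 c1 c2) y (Pi.single 3 1) = y 3 / mh := by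
  rw [(Hfun_hasFDerivAt h1 h2).fderiv]
  simp [ContinuousLinearMap.comp_apply, P01_single3, E4_apply, Pi.single_eq_of_ne,
    Pi.single_eq_same]
  field_simp
  ring

noncomputable def phiL (mh : ℝ) (q2star : ℝ → ℝ) (y : Fin 4 → ℝ) : ℝ :=
  deriv q2star (y 0) * (y 2 / mh) - y 3 / mh

lemma Lfh1_eq_phiL {mh g0 k0 L0 c1 c2 : ℝ} {q2star : ℝ → ℝ} (hmh : mh ≠ 0)
    (hq : Differentiable ℝ q2star) {y : Fin 4 → ℝ}
    (h1 : 0 < legLen c1 y) (h2 : 0 < legLen c2 y) :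
    Lfh1 mh g0 k0 L0 c1 c2 q2star y = phiL mh q2star y := by
  rw [Lfh1, (h1err_hasFDerivAt hq y).fderiv]
  have e0 : fDrift mh g0 k0 L0 c1 c2 y 0 = y 2 / mh := by
    rw [fDrift]
    simp only [Matrix.cons_val_zero]
    exact Hfun_fderiv_single2 hmh h1 h2
  have e1 : fDrift mh g0 k0 L0 c1 c2 y 1 = y 3 / mh := by
    rw [fDrift]
    simp only [Matrix.cons_val_one, Matrix.head_cons]
    exact Hfun_fderiv_single3 hmh h1 h2
  simp only [ContinuousLinearMap.sub_apply, ContinuousLinearMap.smul_apply, E4_apply,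
    smul_eq_mul, e0, e1, phiL]

lemma legLen_continuous (c : ℝ) : Continuous (legLen c) := by
  unfold legLen
  fun_prop

lemma deriv_q2star_diff {q2star : ℝ → ℝ} (hq : ContDiff ℝ 2 q2star) :
    Differentiable ℝ (deriv q2star) := by
  have h2 : ContDiff ℝ ((1 : WithTop ℕ∞) + 1) q2star := by
    exact_mod_cast hq
  exact ((contDiff_succ_iff_deriv.mp h2).2.2).differentiable one_ne_zero

lemma phiL_diff {mh : ℝ} {q2star : ℝ → ℝ} (hq : ContDiff ℝ 2 q2star) (y : Fin 4 → ℝ) :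
    DifferentiableAt ℝ (phiL mh q2star) y := by
  have hd : DifferentiableAt ℝ (fun v : Fin 4 → ℝ => deriv q2star (v 0)) y :=
    by have := (deriv_q2star_diff hq (y 0)).comp y ((E4 0).differentiable.differentiableAt); exact this
  have e2 : DifferentiableAt ℝ (fun v : Fin 4 → ℝ => v 2) y := (E4 2).differentiable.differentiableAt
  have e3 : DifferentiableAt ℝ (fun v : Fin 4 → ℝ => v 3) y := (E4 3).differentiable.differentiableAt
  have h2 : DifferentiableAt ℝ (fun v : Fin 4 → ℝ => v 2 / mh) y := by
    simpa [div_eq_mul_inv] using e2.mul_const mh⁻¹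
  have h3 : DifferentiableAt ℝ (fun v : Fin 4 → ℝ => v 3 / mh) y := by
    simpa [div_eq_mul_inv] using e3.mul_const mh⁻¹
  exact (hd.mul h2).sub h3

lemma Lfh1_eventuallyEq {mh g0 k0 L0 c1 c2 : ℝ} {q2star : ℝ → ℝ} (hmh : mh ≠ 0)
    (hq : Differentiable ℝ q2star) {w : Fin 4 → ℝ}
    (h1 : 0 < legLen c1 w) (h2 : 0 < legLen c2 w) :
    Lfh1 mh g0 k0 L0 c1 c2 q2star =ᶠ[nhds w] phiL mh q2star := by
  have hU : IsOpen {y : Fin 4 → ℝ | 0 < legLen c1 y ∧ 0 < legLen c2 y} :=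
    (isOpen_lt continuous_const (legLen_continuous c1)).inter
      (isOpen_lt continuous_const (legLen_continuous c2))
  filter_upwards [hU.mem_nhds ⟨h1, h2⟩] with y hy
  exact Lfh1_eq_phiL hmh hq hy.1 hy.2

lemma mulVec_cancel {M : Matrix (Fin 2) (Fin 2) ℝ} (hM : IsUnit M) (b : Fin 2 → ℝ) (i : Fin 2) :
    M i 0 * (-(M⁻¹ *ᵥ b)) 0 + M i 1 * (-(M⁻¹ *ᵥ b)) 1 = -(b i) := by
  have h : M *ᵥ (M⁻¹ *ᵥ b) = b := by
    rw [Matrix.mulVec_mulVec, Matrix.mul_nonsing_inv _ ((Matrix.isUnit_iff_isUnit_det M).mp hM),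
      Matrix.one_mulVec]
  have h2 : M i 0 * (-(M⁻¹ *ᵥ b)) 0 + M i 1 * (-(M⁻¹ *ᵥ b)) 1 = -((M *ᵥ (M⁻¹ *ᵥ b)) i) := by
    simp [Matrix.mulVec, dotProduct, Fin.sum_univ_two]
    ring
  rw [h2, h]

lemma key_ineq {κp κd δ : ℝ} (hκp : 0 < κp) (hδ : 2 * κp * δ = κd ^ 2) (a b : ℝ) :
    -(κd * (a * b)) ≤ κp / 2 * a ^ 2 + δ * b ^ 2 := by
  nlinarith [sq_nonneg (κp * a + κd * b), hκp, sq_nonneg b, sq_nonneg a]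

lemma sq_tendsto_zero {y : ℝ → ℝ} (h : Tendsto (fun t => y t * y t) atTop (nhds 0)) :
    Tendsto y atTop (nhds 0) := by
  have habs : Tendsto (fun t => |y t|) atTop (nhds 0) := by
    have := (Real.continuous_sqrt.tendsto 0).comp h
    simp only [Function.comp_def, Real.sqrt_zero] at this
    refine this.congr fun t => ?_
    rw [← Real.sqrt_mul_self (abs_nonneg (y t)), abs_mul_abs_self]
  exact tendsto_zero_iff_abs_tendsto_zero y |>.mpr habs

lemma decay2 {κp κd : ℝ} (hκp : 0 < κp) (hκd : 0 < κd) {y z : ℝ → ℝ}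
    (hy : ∀ t ≥ (0 : ℝ), HasDerivAt y (z t) t)
    (hz : ∀ t ≥ (0 : ℝ), HasDerivAt z (-(κd * z t + κp * y t)) t) :
    Tendsto y atTop (nhds 0) ∧ Tendsto z atTop (nhds 0) := by
  set δ := κd ^ 2 / (2 * κp) with hδ
  have hδeq : 2 * κp * δ = κd ^ 2 := by rw [hδ]; field_simp
  have hδ0 : 0 ≤ δ := by positivity
  set ε := min κp (min 1 (κd / (1 + δ))) with hε
  have hε0 : 0 < ε := lt_min hκp (lt_min one_pos (by positivity))
  have hεκp : ε ≤ κp := min_le_left _ _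
  have hε1 : ε ≤ 1 := le_trans (min_le_right _ _) (min_le_left _ _)
  have hεd : ε * (1 + δ) ≤ κd := by
    have h1δ : (0 : ℝ) < 1 + δ := by positivity
    have h := le_trans (min_le_right κp _) (min_le_right 1 (κd / (1 + δ)))
    calc ε * (1 + δ) ≤ κd / (1 + δ) * (1 + δ) := by nlinarith
      _ = κd := by field_simp
  set c := min (ε / 3) (min (2 * κd / 3) (κp / 3)) with hc
  have hc0 : 0 < c := lt_min (by positivity) (lt_min (by positivity) (by positivity))
  have hc1 : c ≤ ε / 3 := min_le_left _ _
  have hc2 : c ≤ 2 * κd / 3 := le_trans (min_le_right _ _) (min_le_left _ _)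
  have hc3 : c ≤ κp / 3 := le_trans (min_le_right _ _) (min_le_right _ _)
  set V := fun t => κp * (y t * y t) + z t * z t + ε * (y t * z t) with hV
  set Vd := fun t => κp * (z t * y t + y t * z t)
    + (-(κd * z t + κp * y t) * z t + z t * -(κd * z t + κp * y t))
    + ε * (z t * z t + y t * -(κd * z t + κp * y t)) with hVd
  have hVderiv : ∀ t ≥ (0 : ℝ), HasDerivAt V (Vd t) t := fun t ht =>
    ((((hy t ht).mul (hy t ht)).const_mul κp).add
      ((hz t ht).mul (hz t ht))).add (((hy t ht).mul (hz t ht)).const_mul ε)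
  have hkey : ∀ t : ℝ, c * V t + Vd t ≤ 0 := by
    intro t
    set a := y t
    set b := z t
    have A6 := mul_le_mul_of_nonneg_left (key_ineq hκp hδeq a b) hε0.le
    have h2ab : a * b ≤ (a * a + b * b) / 2 := by nlinarith [sq_nonneg (a - b)]
    have A7 := mul_le_mul_of_nonneg_left h2ab (mul_nonneg hc0.le hε0.le)
    have A1 := mul_le_mul_of_nonneg_right
      (mul_le_mul_of_nonneg_right hc1 hκp.le) (mul_self_nonneg a)
    have A2 := mul_le_mul_of_nonneg_right
      (mul_le_mul_of_nonneg_right hc3 hε0.le) (mul_self_nonneg a)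
    have A3 := mul_le_mul_of_nonneg_right
      (mul_le_mul_of_nonneg_left hε1 hc0.le) (mul_self_nonneg b)
    have A4 := mul_le_mul_of_nonneg_right hc2 (mul_self_nonneg b)
    have A5 := mul_le_mul_of_nonneg_right hεd (mul_self_nonneg b)
    simp only [hV, hVd]
    nlinarith [A1, A2, A3, A4, A5, A6, A7, mul_self_nonneg a, mul_self_nonneg b]
  set W := fun t => Real.exp (c * t) * V t with hW
  have hWderiv : ∀ t ≥ (0 : ℝ), HasDerivAt W (Real.exp (c * t) * (c * V t + Vd t)) t := by
    intro t ht
    have hexp : HasDerivAt (fun s : ℝ => Real.exp (c * s)) (Real.exp (c * t) * c) t := by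
      simpa using ((hasDerivAt_id t).const_mul c).exp
    have : HasDerivAt (fun s => Real.exp (c * s) * V s) _ t := hexp.mul (hVderiv t ht)
    convert this using 1
    ring
  have hanti : AntitoneOn W (Set.Ici 0) := by
    apply antitoneOn_of_deriv_nonpos (convex_Ici 0)
    · exact fun t ht => ((hWderiv t ht).continuousAt.continuousWithinAt)
    · intro t ht
      rw [interior_Ici] at ht
      exact ((hWderiv t (le_of_lt ht)).differentiableAt.differentiableWithinAt)
    · intro t ht
      rw [interior_Ici] at ht
      rw [(hWderiv t (le_of_lt ht)).deriv]
      exact mul_nonpos_of_nonneg_of_nonpos (Real.exp_pos _).le (hkey t)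
  have hVbound : ∀ t ≥ (0 : ℝ), V t ≤ V 0 * Real.exp (-(c * t)) := by
    intro t ht
    have h1 : W t ≤ W 0 := hanti Set.self_mem_Ici ht ht
    have h2 : W 0 = V 0 := by simp [hW]
    rw [h2] at h1
    have h3 : Real.exp (-(c * t)) * (Real.exp (c * t) * V t) ≤ Real.exp (-(c * t)) * V 0 :=
      mul_le_mul_of_nonneg_left h1 (Real.exp_pos _).le
    calc V t = Real.exp (-(c * t)) * (Real.exp (c * t) * V t) := by
          rw [← mul_assoc, ← Real.exp_add]
          simp
      _ ≤ Real.exp (-(c * t)) * V 0 := h3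
      _ = V 0 * Real.exp (-(c * t)) := mul_comm _ _
  have hlowY : ∀ t : ℝ, κp / 2 * (y t * y t) ≤ V t := by
    intro t
    simp only [hV]
    nlinarith [mul_le_mul_of_nonneg_left (sq_nonneg (y t + z t)) hε0.le,
      mul_le_mul_of_nonneg_right hεκp (mul_self_nonneg (y t)),
      mul_le_mul_of_nonneg_right hε1 (mul_self_nonneg (z t)), mul_self_nonneg (y t),
      mul_self_nonneg (z t)]
  have hlowZ : ∀ t : ℝ, (1 : ℝ) / 2 * (z t * z t) ≤ V t := by
    intro t
    simp only [hV]
    nlinarith [mul_le_mul_of_nonneg_left (sq_nonneg (y t + z t)) hε0.le,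
      mul_le_mul_of_nonneg_right hεκp (mul_self_nonneg (y t)),
      mul_le_mul_of_nonneg_right hε1 (mul_self_nonneg (z t)), mul_self_nonneg (y t),
      mul_self_nonneg (z t)]
  have hexp0 : Tendsto (fun t : ℝ => V 0 * Real.exp (-(c * t))) atTop (nhds 0) := by
    have h1 : Tendsto (fun t : ℝ => c * t) atTop atTop :=
      Tendsto.const_mul_atTop hc0 tendsto_id
    have h2 : Tendsto (fun t : ℝ => Real.exp (-(c * t))) atTop (nhds 0) :=
      Real.tendsto_exp_neg_atTop_nhds_zero.comp h1
    have h3 := h2.const_mul (V 0)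
    rw [mul_zero] at h3
    exact h3
  have htY : Tendsto (fun t => y t * y t) atTop (nhds 0) := by
    apply squeeze_zero' (Filter.Eventually.of_forall fun t => mul_self_nonneg (y t))
      (g := fun t => 2 / κp * (V 0 * Real.exp (-(c * t))))
    · filter_upwards [eventually_ge_atTop (0 : ℝ)] with t ht
      have hb := (hlowY t).trans (hVbound t ht)
      have h' : y t * y t = 2 / κp * (κp / 2 * (y t * y t)) := by
        field_simp
      rw [h']
      exact mul_le_mul_of_nonneg_left hb (by positivity)
    · have h0 := hexp0.const_mul (2 / κp)
      rw [mul_zero] at h0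
      exact h0
  have htZ : Tendsto (fun t => z t * z t) atTop (nhds 0) := by
    apply squeeze_zero' (Filter.Eventually.of_forall fun t => mul_self_nonneg (z t))
      (g := fun t => 2 * (V 0 * Real.exp (-(c * t))))
    · filter_upwards [eventually_ge_atTop (0 : ℝ)] with t ht
      have hb := (hlowZ t).trans (hVbound t ht)
      have h' : z t * z t = 2 * (1 / 2 * (z t * z t)) := by ring
      rw [h']
      exact mul_le_mul_of_nonneg_left hb (by norm_num)
    · have h0 := hexp0.const_mul (2 : ℝ)
      rw [mul_zero] at h0
      exact h0
  exact ⟨sq_tendsto_zero htY, sq_tendsto_zero htZ⟩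

end S18

/-- Double-support case of Proposition 1: along any C¹ solution of the closed-loop
double-support V-SLIP dynamics with the decoupling feedback and invertible decoupling
matrix, the height error `h1` and its time derivative converge to zero, and the
forward-velocity error satisfies `h2(x(t)) = e^{-κ_v t} h2(x(0)) → 0`. -/
theorem stmt18 (mh g0 k0 L0 c1 c2 κp κd κv : ℝ)
    (hmh : 0 < mh) (hg : 0 < g0) (hk : 0 < k0) (hL0 : 0 < L0) (hc : c1 ≠ c2)
    (hκp : 0 < κp) (hκd : 0 < κd) (hκv : 0 < κv)
    (q2star vstar : ℝ → ℝ) (hq2star : ContDiff ℝ 2 q2star) (hvstar : ContDiff ℝ 1 vstar)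
    (x : ℝ → (Fin 4 → ℝ))
    (hL1pos : ∀ t ≥ (0 : ℝ), 0 < legLen c1 (x t))
    (hL2pos : ∀ t ≥ (0 : ℝ), 0 < legLen c2 (x t))
    (hAinv : ∀ t ≥ (0 : ℝ), IsUnit (Amat mh g0 k0 L0 c1 c2 q2star vstar (x t)))
    (hx : ∀ t ≥ (0 : ℝ), HasDerivAt x
      (fDrift mh g0 k0 L0 c1 c2 (x t)
        + uFb mh g0 k0 L0 c1 c2 κp κd κv q2star vstar (x t) 0 • gInput c1 L0 (x t)
        + uFb mh g0 k0 L0 c1 c2 κp κd κv q2star vstar (x t) 1 • gInput c2 L0 (x t)) t) :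
    Tendsto (fun t => h1err q2star (x t)) atTop (nhds 0) ∧
    Tendsto (deriv (fun t => h1err q2star (x t))) atTop (nhds 0) ∧
    (∀ t ≥ (0 : ℝ), h2err mh vstar (x t) = Real.exp (-κv * t) * h2err mh vstar (x 0)) ∧
    Tendsto (fun t => h2err mh vstar (x t)) atTop (nhds 0) := by
  have hmh' : mh ≠ 0 := hmh.ne'
  have hq2d : Differentiable ℝ q2star := hq2star.differentiable (by norm_num)
  have hvd : Differentiable ℝ vstar := hvstar.differentiable one_ne_zero
  -- abbreviations
  set bv := fun t =>
    ![fderiv ℝ (Lfh1 mh g0 k0 L0 c1 c2 q2star) (x t) (fDrift mh g0 k0 L0 c1 c2 (x t))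
        + κd * Lfh1 mh g0 k0 L0 c1 c2 q2star (x t) + κp * h1err q2star (x t),
      fderiv ℝ (h2err mh vstar) (x t) (fDrift mh g0 k0 L0 c1 c2 (x t))
        + κv * h2err mh vstar (x t)] with hbv
  have huFb : ∀ t, uFb mh g0 k0 L0 c1 c2 κp κd κv q2star vstar (x t) = -((Amat mh g0 k0 L0 c1 c2 q2star vstar (x t))⁻¹ *ᵥ bv t) :=
    fun t => rfl
  have hg0 : ∀ c (y : Fin 4 → ℝ), gInput c L0 y 0 = 0 := fun c y => rfl
  have hg1 : ∀ c (y : Fin 4 → ℝ), gInput c L0 y 1 = 0 := fun c y => rfl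
  -- derivative of h1 along the flow
  have hd1 : ∀ t ≥ (0 : ℝ), HasDerivAt (fun s => h1err q2star (x s))
      (Lfh1 mh g0 k0 L0 c1 c2 q2star (x t)) t := by
    intro t ht
    have hD := S18.h1err_hasFDerivAt hq2d (x t)
    have hchain : HasDerivAt (fun s => h1err q2star (x s)) _ t := hD.comp_hasDerivAt t (hx t ht)
    convert hchain using 1
    rw [Lfh1, (S18.h1err_hasFDerivAt hq2d (x t)).fderiv]
    rw [map_add, map_add, ContinuousLinearMap.map_smul, ContinuousLinearMap.map_smul]
    have hz1 : (deriv q2star (x t 0) • S18.E4 0 - S18.E4 1) (gInput c1 L0 (x t)) = 0 := by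
      simp [ContinuousLinearMap.sub_apply, ContinuousLinearMap.smul_apply, S18.E4_apply,
        hg0, hg1]
    have hz2 : (deriv q2star (x t 0) • S18.E4 0 - S18.E4 1) (gInput c2 L0 (x t)) = 0 := by
      simp [ContinuousLinearMap.sub_apply, ContinuousLinearMap.smul_apply, S18.E4_apply,
        hg0, hg1]
    rw [hz1, hz2]
    simp
  -- derivative of h2 along the flow
  have hd2 : ∀ t ≥ (0 : ℝ), HasDerivAt (fun s => h2err mh vstar (x s))
      (-(κv * h2err mh vstar (x t))) t := by
    intro t ht
    have hD := (S18.h2err_hasFDerivAt (mh := mh) hvd (x t)).differentiableAt.hasFDerivAt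
    have hchain : HasDerivAt (fun s => h2err mh vstar (x s)) _ t := hD.comp_hasDerivAt t (hx t ht)
    convert hchain using 1
    rw [map_add, map_add, ContinuousLinearMap.map_smul, ContinuousLinearMap.map_smul, smul_eq_mul, smul_eq_mul]
    have hcan := S18.mulVec_cancel (hAinv t ht) (bv t) 1
    have hA10 : Amat mh g0 k0 L0 c1 c2 q2star vstar (x t) 1 0 = fderiv ℝ (h2err mh vstar) (x t) (gInput c1 L0 (x t)) := by
      simp [Amat]
    have hA11 : Amat mh g0 k0 L0 c1 c2 q2star vstar (x t) 1 1 = fderiv ℝ (h2err mh vstar) (x t) (gInput c2 L0 (x t)) := by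
      simp [Amat]
    have hbv1 : bv t 1 = fderiv ℝ (h2err mh vstar) (x t) (fDrift mh g0 k0 L0 c1 c2 (x t))
        + κv * h2err mh vstar (x t) := by
      simp [hbv]
    rw [hA10, hA11, hbv1] at hcan
    have hu0 : uFb mh g0 k0 L0 c1 c2 κp κd κv q2star vstar (x t) 0 = (-((Amat mh g0 k0 L0 c1 c2 q2star vstar (x t))⁻¹ *ᵥ bv t)) 0 := by
      rw [huFb]
    have hu1 : uFb mh g0 k0 L0 c1 c2 κp κd κv q2star vstar (x t) 1 = (-((Amat mh g0 k0 L0 c1 c2 q2star vstar (x t))⁻¹ *ᵥ bv t)) 1 := by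
      rw [huFb]
    rw [hu0, hu1]
    linarith [hcan]
  -- derivative of L_f h1 along the flow
  have hd3 : ∀ t ≥ (0 : ℝ), HasDerivAt (fun s => Lfh1 mh g0 k0 L0 c1 c2 q2star (x s))
      (-(κd * Lfh1 mh g0 k0 L0 c1 c2 q2star (x t) + κp * h1err q2star (x t))) t := by
    intro t ht
    have hEq := S18.Lfh1_eventuallyEq (g0 := g0) (k0 := k0) (L0 := L0) hmh' hq2d
      (hL1pos t ht) (hL2pos t ht)
    have hdiff : DifferentiableAt ℝ (Lfh1 mh g0 k0 L0 c1 c2 q2star) (x t) :=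
      ((S18.phiL_diff hq2star (x t)).hasFDerivAt.congr_of_eventuallyEq hEq).differentiableAt
    have hchain : HasDerivAt (fun s => Lfh1 mh g0 k0 L0 c1 c2 q2star (x s)) _ t := (hdiff.hasFDerivAt).comp_hasDerivAt t (hx t ht)
    convert hchain using 1
    rw [map_add, map_add, ContinuousLinearMap.map_smul, ContinuousLinearMap.map_smul, smul_eq_mul, smul_eq_mul]
    have hcan := S18.mulVec_cancel (hAinv t ht) (bv t) 0
    have hA00 : Amat mh g0 k0 L0 c1 c2 q2star vstar (x t) 0 0 = fderiv ℝ (Lfh1 mh g0 k0 L0 c1 c2 q2star) (x t) (gInput c1 L0 (x t)) := by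
      simp [Amat]
    have hA01 : Amat mh g0 k0 L0 c1 c2 q2star vstar (x t) 0 1 = fderiv ℝ (Lfh1 mh g0 k0 L0 c1 c2 q2star) (x t) (gInput c2 L0 (x t)) := by
      simp [Amat]
    have hbv0 : bv t 0 = fderiv ℝ (Lfh1 mh g0 k0 L0 c1 c2 q2star) (x t)
        (fDrift mh g0 k0 L0 c1 c2 (x t))
        + κd * Lfh1 mh g0 k0 L0 c1 c2 q2star (x t) + κp * h1err q2star (x t) := by
      simp [hbv]
    rw [hA00, hA01, hbv0] at hcan
    have hu0 : uFb mh g0 k0 L0 c1 c2 κp κd κv q2star vstar (x t) 0 = (-((Amat mh g0 k0 L0 c1 c2 q2star vstar (x t))⁻¹ *ᵥ bv t)) 0 := by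
      rw [huFb]
    have hu1 : uFb mh g0 k0 L0 c1 c2 κp κd κv q2star vstar (x t) 1 = (-((Amat mh g0 k0 L0 c1 c2 q2star vstar (x t))⁻¹ *ᵥ bv t)) 1 := by
      rw [huFb]
    rw [hu0, hu1]
    linarith [hcan]
  -- apply the Lyapunov decay lemma
  obtain ⟨htend1, htend2⟩ := S18.decay2 hκp hκd hd1 hd3
  -- the h2 exponential formula
  have hform : ∀ t ≥ (0 : ℝ), h2err mh vstar (x t) = Real.exp (-κv * t) * h2err mh vstar (x 0) := by
    intro t ht
    set G := fun s => Real.exp (κv * s) * h2err mh vstar (x s) with hG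
    have hGd : ∀ s ≥ (0 : ℝ), HasDerivAt G 0 s := by
      intro s hs
      have hexp : HasDerivAt (fun r : ℝ => Real.exp (κv * r)) (Real.exp (κv * s) * κv) s := by
        simpa using ((hasDerivAt_id s).const_mul κv).exp
      have : HasDerivAt (fun r => Real.exp (κv * r) * h2err mh vstar (x r)) _ s := hexp.mul (hd2 s hs)
      convert this using 1
      ring
    have hconst := constant_of_has_deriv_right_zero (f := G) (a := 0) (b := t)
      (fun s hs => (hGd s hs.1).continuousAt.continuousWithinAt)
      (fun s hs => (hGd s hs.1).hasDerivWithinAt)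
    have hGt : G t = G 0 := hconst t ⟨ht, le_refl t⟩
    have hG0 : G 0 = h2err mh vstar (x 0) := by simp [hG]
    rw [hG0] at hGt
    rw [show -κv * t = -(κv * t) by ring, Real.exp_neg, ← hGt]
    rw [hG]
    rw [inv_mul_cancel_left₀ (Real.exp_ne_zero _)]
  -- tendsto of h2
  have htend4 : Tendsto (fun t => h2err mh vstar (x t)) atTop (nhds 0) := by
    have h1 : Tendsto (fun t : ℝ => κv * t) atTop atTop :=
      Tendsto.const_mul_atTop hκv tendsto_id
    have h2 : Tendsto (fun t : ℝ => Real.exp (-(κv * t))) atTop (nhds 0) :=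
      Real.tendsto_exp_neg_atTop_nhds_zero.comp h1
    have h3 := h2.mul_const (h2err mh vstar (x 0))
    rw [zero_mul] at h3
    apply Tendsto.congr' _ h3
    filter_upwards [eventually_ge_atTop (0 : ℝ)] with t ht
    rw [hform t ht]
    ring_nf
  -- tendsto of the derivative of h1
  have htendD : Tendsto (deriv (fun t => h1err q2star (x t))) atTop (nhds 0) := by
    apply Tendsto.congr' _ htend2
    filter_upwards [eventually_ge_atTop (0 : ℝ)] with t ht
    exact ((hd1 t ht).deriv).symm
  exact ⟨htend1, htendD, hform, htend4⟩
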